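/- For every even integer k with 2 ≤ k ≤ ⌈D/2⌉ there exists a subspace W of ℂ^X of dimension ⌈D/2⌉ − k + 1 that is invariant under both A and A*, contains no nonzero proper subspace invariant under both A and A*, and has a basis w_0, …, w_{⌈D/2⌉−k} such that for all 0 ≤ i ≤ ⌈D/2⌉−k one has A·w_i = γ_i·w_{i−1} + α_i·w_i + β_i·w_{i+1} and A*·w_i = (D − 2(2i+k))·w_i, where α_i = (2i+1)(D−2i−2k+1) − k + 1, β_i = (i+1)(2i+3), γ_i = (D−2i−2k+2)(D−2i−2k+3)/2, and by convention w_{−1} = 0 and w_{⌈D/2⌉−k+1} = 0. -/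

import Mathlib

open Matrix

/-- Vertex set of the hypercube `H(D,2)`: binary words of length `D`. -/
abbrev Vtx (D : ℕ) := Fin D → ZMod 2

/-- Vertex set of the halved cube: binary words of even Hamming weight. -/
abbrev HVtx (D : ℕ) := {x : Vtx D // Even (hammingNorm x)}

/-- Adjacency matrix of the halved cube `½H(D,2)`. -/
noncomputable def adjHalf (D : ℕ) : Matrix (HVtx D) (HVtx D) ℂ :=
  fun y z => if hammingNorm (y.val - z.val) = 2 then 1 else 0

/-- Dual adjacency matrix of the halved cube with respect to `x₀`. -/
noncomputable def dualHalf (D : ℕ) (x₀ : HVtx D) : Matrix (HVtx D) (HVtx D) ℂ :=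
  Matrix.diagonal fun y => (D : ℂ) - 2 * hammingNorm (x₀.val - y.val)

/-- A submodule is invariant under (the action by `mulVec` of) a matrix. -/
def MatInvariant {n : Type*} [Fintype n] (M : Matrix n n ℂ) (W : Submodule ℂ (n → ℂ)) : Prop :=
  ∀ v ∈ W, M.mulVec v ∈ W


open Finset
namespace HalvedAux

variable {D : ℕ}

/-- flip vector at ℕ-position `x` (zero if `x ≥ D`). -/
def ε (D x : ℕ) : Vtx D := fun y => if (y : ℕ) = x then 1 else 0

/-- `x`-th bit, total in ℕ. -/
def bit (c : Vtx D) (x : ℕ) : ZMod 2 := if h : x < D then c ⟨x, h⟩ else 0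

lemma zmod2_cases (a : ZMod 2) : a = 0 ∨ a = 1 := by fin_cases a <;> [exact Or.inl rfl; exact Or.inr rfl]

lemma bit_add (c c' : Vtx D) (x : ℕ) : bit (c + c') x = bit c x + bit c' x := by
  unfold bit; split <;> simp

lemma bit_eps (x y : ℕ) : bit (ε D x) y = if y = x ∧ y < D then 1 else 0 := by
  unfold bit ε
  split
  · rename_i h
    by_cases hxy : y = x
    · subst hxy; simp [h]
    · simp [hxy]
  · rename_i h
    simp [h]

lemma bit_eps_self (x : ℕ) (hx : x < D) : bit (ε D x) x = 1 := by
  simp [bit_eps, hx]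

lemma bit_eps_ne (x y : ℕ) (h : y ≠ x) : bit (ε D x) y = 0 := by
  simp [bit_eps, h]

lemma bit_flip_ne (c : Vtx D) (x y : ℕ) (h : y ≠ x) : bit (c + ε D x) y = bit c y := by
  rw [bit_add, bit_eps_ne _ _ h, add_zero]

lemma bit_flip_self (c : Vtx D) (x : ℕ) (hx : x < D) : bit (c + ε D x) x = bit c x + 1 := by
  rw [bit_add, bit_eps_self _ hx]

lemma eps_add_self (x : ℕ) : ε D x + ε D x = 0 := by
  funext y; show ε D x y + ε D x y = 0; rcases zmod2_cases (ε D x y) with h | h <;> rw [h] <;> decide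

/-- value of a "pair": +1 on (0,1), -1 on (1,0), 0 otherwise. -/
noncomputable def pv (a b : ZMod 2) : ℂ :=
  if a = 0 ∧ b = 1 then 1 else if a = 1 ∧ b = 0 then -1 else 0

lemma pv_cross (a b : ZMod 2) : pv (a + 1) b + pv a (b + 1) = 0 := by
  rcases zmod2_cases a with ha | ha <;> rcases zmod2_cases b with hb | hb <;>
    subst ha <;> subst hb <;>
    simp [pv, (by decide : (0:ZMod 2) + 1 = 1), (by decide : (1:ZMod 2) + 1 = 0)]

variable (D) in
/-- product over the `r` pairs. -/
noncomputable def P (r : ℕ) (c : Vtx D) : ℂ :=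
  ∏ t ∈ range r, pv (bit c (2 * t)) (bit c (2 * t + 1))

variable (D) in
/-- tail weight. -/
def tw (r : ℕ) (c : Vtx D) : ℕ := #((Ico (2 * r) D).filter (fun x => bit c x = 1))

variable (D) in
noncomputable def V (r m : ℕ) (c : Vtx D) : ℂ := P D r c * (if tw D r c = m then 1 else 0)

lemma tw_le (r : ℕ) (c : Vtx D) : tw D r c ≤ D - 2 * r := by
  unfold tw
  calc _ ≤ #(Ico (2*r) D) := Finset.card_filter_le _ _
  _ = D - 2*r := Nat.card_Ico _ _

lemma P_flip_tail (r : ℕ) (c : Vtx D) (x : ℕ) (hx : 2 * r ≤ x) : P D r (c + ε D x) = P D r c := by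
  unfold P
  apply Finset.prod_congr rfl
  intro t ht
  rw [Finset.mem_range] at ht
  rw [bit_flip_ne _ _ _ (by omega), bit_flip_ne _ _ _ (by omega)]

lemma tw_flip_pair (r : ℕ) (c : Vtx D) (x : ℕ) (hx : x < 2 * r) : tw D r (c + ε D x) = tw D r c := by
  unfold tw
  congr 1
  apply Finset.filter_congr
  intro y hy
  rw [Finset.mem_Ico] at hy
  rw [bit_flip_ne _ _ _ (by omega)]

lemma tw_flip_one (r : ℕ) (c : Vtx D) (x : ℕ) (hx : 2 * r ≤ x) (hxD : x < D)
    (h1 : bit c x = 1) : tw D r (c + ε D x) + 1 = tw D r c := by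
  unfold tw
  have hset : (Ico (2*r) D).filter (fun y => bit (c + ε D x) y = 1)
      = ((Ico (2*r) D).filter (fun y => bit c y = 1)).erase x := by
    ext y
    simp only [Finset.mem_erase, Finset.mem_filter, Finset.mem_Ico]
    by_cases hy : y = x
    · subst hy
      rw [bit_flip_self _ _ hxD, h1]
      simp
    · rw [bit_flip_ne _ _ _ hy]
      tauto
  rw [hset]
  exact Finset.card_erase_add_one (by simp [Finset.mem_filter, Finset.mem_Ico, hx, hxD, h1])

lemma tw_flip_zero (r : ℕ) (c : Vtx D) (x : ℕ) (hx : 2 * r ≤ x) (hxD : x < D)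
    (h0 : bit c x = 0) : tw D r (c + ε D x) = tw D r c + 1 := by
  unfold tw
  have hset : (Ico (2*r) D).filter (fun y => bit (c + ε D x) y = 1)
      = insert x ((Ico (2*r) D).filter (fun y => bit c y = 1)) := by
    ext y
    simp only [Finset.mem_insert, Finset.mem_filter, Finset.mem_Ico]
    by_cases hy : y = x
    · subst hy
      rw [bit_flip_self _ _ hxD, h0]
      simp [hx, hxD]
    · rw [bit_flip_ne _ _ _ hy]
      tauto
  rw [hset, Finset.card_insert_of_notMem (by simp [Finset.mem_filter, h0])]




lemma sum_range_two_mul {M : Type*} [AddCommMonoid M] (R : ℕ) (g : ℕ → M) :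
    ∑ x ∈ range (2 * R), g x = ∑ t ∈ range R, (g (2 * t) + g (2 * t + 1)) := by
  induction R with
  | zero => simp
  | succ R ih =>
    rw [show 2 * (R + 1) = (2 * R) + 1 + 1 by ring, Finset.sum_range_succ, Finset.sum_range_succ,
      ih, Finset.sum_range_succ]
    rw [add_assoc]

lemma P_pair_flip (r : ℕ) (c : Vtx D) (t : ℕ) (ht : t < r) (htD : 2 * t + 1 < D) :
    P D r (c + ε D (2 * t)) + P D r (c + ε D (2 * t + 1)) = 0 := by
  have htm : t ∈ range r := Finset.mem_range.mpr ht
  have factor : ∀ x : ℕ, x = 2 * t ∨ x = 2 * t + 1 → P D r (c + ε D x) =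
      pv (bit (c + ε D x) (2 * t)) (bit (c + ε D x) (2 * t + 1)) *
        ∏ s ∈ (range r).erase t, pv (bit c (2 * s)) (bit c (2 * s + 1)) := by
    intro x hx
    unfold P
    rw [← Finset.mul_prod_erase _ _ htm]
    congr 1
    apply Finset.prod_congr rfl
    intro s hs
    have hst : s ≠ t := (Finset.mem_erase.mp hs).1
    rw [bit_flip_ne _ _ _ (by omega), bit_flip_ne _ _ _ (by omega)]
  rw [factor _ (Or.inl rfl), factor _ (Or.inr rfl), ← add_mul]
  rw [bit_flip_self _ _ (by omega), bit_flip_ne _ _ _ (by omega),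
    bit_flip_ne _ _ _ (by omega), bit_flip_self _ _ htD]
  rw [pv_cross, zero_mul]

lemma V_pair_flip (r m : ℕ) (c : Vtx D) (t : ℕ) (ht : t < r) (htD : 2 * t + 1 < D) :
    V D r m (c + ε D (2 * t)) + V D r m (c + ε D (2 * t + 1)) = 0 := by
  unfold V
  rw [tw_flip_pair r c _ (by omega), tw_flip_pair r c _ (by omega), ← add_mul,
    P_pair_flip r c t ht htD, zero_mul]

/-- The single-flip (hypercube adjacency) relation. -/
lemma L1 (r : ℕ) (hrD : 2 * r ≤ D) (m : ℕ) (c : Vtx D) :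
    ∑ x ∈ range D, V D r m (c + ε D x)
      = ((D : ℂ) - 2 * r - m + 1) * (if m = 0 then 0 else V D r (m - 1) c)
        + ((m : ℂ) + 1) * V D r (m + 1) c := by
  rw [Finset.range_eq_Ico, ← Finset.sum_Ico_consecutive _ (Nat.zero_le (2 * r)) hrD]
  have pairpart : ∑ x ∈ Ico 0 (2 * r), V D r m (c + ε D x) = 0 := by
    rw [← Finset.range_eq_Ico]
    rw [sum_range_two_mul]
    apply Finset.sum_eq_zero
    intro t ht
    exact V_pair_flip r m c t (Finset.mem_range.mp ht) (by have := Finset.mem_range.mp ht; omega)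
  rw [pairpart, zero_add]
  -- tail part
  have hsplit := Finset.sum_filter_add_sum_filter_not (Ico (2 * r) D)
    (fun x => bit c x = 1) (fun x => V D r m (c + ε D x))
  rw [← hsplit]
  have hone : ∑ x ∈ (Ico (2 * r) D).filter (fun x => bit c x = 1), V D r m (c + ε D x)
      = (if tw D r c = m + 1 then ((m : ℂ) + 1) * P D r c else 0) := by
    have hterm : ∀ x ∈ (Ico (2 * r) D).filter (fun x => bit c x = 1),
        V D r m (c + ε D x) = (if tw D r c = m + 1 then P D r c else 0) := by
      intro x hx
      rw [Finset.mem_filter, Finset.mem_Ico] at hx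
      unfold V
      rw [P_flip_tail r c x hx.1.1]
      have h1 := tw_flip_one r c x hx.1.1 hx.1.2 hx.2
      have : (tw D r (c + ε D x) = m) ↔ (tw D r c = m + 1) := by omega
      simp only [this]
      split <;> simp
    rw [Finset.sum_congr rfl hterm, Finset.sum_const]
    have hcard : #((Ico (2 * r) D).filter (fun x => bit c x = 1)) = tw D r c := rfl
    rw [hcard]
    split
    · rename_i h
      rw [h]
      push_cast
      ring
    · simp
  have hzero : ∑ x ∈ (Ico (2 * r) D).filter (fun x => ¬ bit c x = 1), V D r m (c + ε D x)
      = (if tw D r c + 1 = m then ((D : ℂ) - 2 * r - tw D r c) * P D r c else 0) := by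
    have hterm : ∀ x ∈ (Ico (2 * r) D).filter (fun x => ¬ bit c x = 1),
        V D r m (c + ε D x) = (if tw D r c + 1 = m then P D r c else 0) := by
      intro x hx
      rw [Finset.mem_filter, Finset.mem_Ico] at hx
      have h0 : bit c x = 0 := by rcases zmod2_cases (bit c x) with h | h; exact h; exact absurd h hx.2
      unfold V
      rw [P_flip_tail r c x hx.1.1]
      rw [tw_flip_zero r c x hx.1.1 hx.1.2 h0]
      split <;> simp
    rw [Finset.sum_congr rfl hterm, Finset.sum_const]
    have hcard : #((Ico (2 * r) D).filter (fun x => ¬ bit c x = 1)) = D - 2 * r - tw D r c := by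
      have := Finset.card_filter_add_card_filter_not (s := Ico (2 * r) D)
        (fun x => bit c x = 1)
      have hIco : #(Ico (2 * r) D) = D - 2 * r := Nat.card_Ico _ _
      have htw : #((Ico (2 * r) D).filter (fun x => bit c x = 1)) = tw D r c := rfl
      omega
    rw [hcard]
    split
    · rename_i h
      have hle : tw D r c ≤ D - 2 * r := tw_le r c
      rw [nsmul_eq_mul, Nat.cast_sub hle, Nat.cast_sub hrD]
      push_cast
      ring
    · simp
  rw [hone, hzero]
  unfold V
  by_cases h1 : tw D r c = m + 1
  · rw [if_pos h1, if_neg (by omega : ¬ tw D r c + 1 = m), if_pos h1]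
    by_cases hm : m = 0
    · rw [if_pos hm]
      ring
    · rw [if_neg hm, if_neg (by omega : ¬ tw D r c = m - 1)]
      ring
  · rw [if_neg h1, if_neg h1]
    by_cases h2 : tw D r c + 1 = m
    · rw [if_pos h2, if_neg (by omega : ¬ m = 0), if_pos (by omega : tw D r c = m - 1)]
      have hmC : (m : ℂ) = (tw D r c : ℂ) + 1 := by rw [← h2]; push_cast; ring
      rw [hmC]; ring
    · rw [if_neg h2]
      by_cases hm : m = 0
      · rw [if_pos hm]; ring
      · rw [if_neg hm, if_neg (by omega : ¬ tw D r c = m - 1)]; ring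


variable {D : ℕ}

lemma eps_eq_of (x x' : ℕ) (hx : x < D) (h : ε D x = ε D x') : x = x' := by
  by_contra hne
  have := congrFun h ⟨x, hx⟩
  simp [ε, hne] at this

lemma wt_eps_pair (x x' : ℕ) (hx : x < D) (hx' : x' < D) (hne : x ≠ x') :
    hammingNorm (ε D x + ε D x') = 2 := by
  unfold hammingNorm
  have : Finset.univ.filter (fun i => (ε D x + ε D x') i ≠ 0) = {(⟨x, hx⟩ : Fin D), ⟨x', hx'⟩} := by
    ext y
    simp only [Finset.mem_filter, Finset.mem_univ, true_and, Finset.mem_insert,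
      Finset.mem_singleton]
    constructor
    · intro h
      by_contra hy
      push_neg at hy
      have hy1 : (y : ℕ) ≠ x := fun hh => hy.1 (Fin.ext hh)
      have hy2 : (y : ℕ) ≠ x' := fun hh => hy.2 (Fin.ext hh)
      apply h
      show ε D x y + ε D x' y = 0
      simp [ε, hy1, hy2]
    · intro h
      rcases h with h | h <;> subst h <;>
        · show ε D x _ + ε D x' _ ≠ 0
          simp [ε, hne, Ne.symm hne]
  rw [this]
  rw [Finset.card_insert_of_notMem (by simp [Fin.ext_iff, hne]), Finset.card_singleton]

lemma eq_eps_pair_of_wt_two (d : Vtx D) (hd : hammingNorm d = 2) :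
    ∃ a b : ℕ, a < D ∧ b < D ∧ a ≠ b ∧ d = ε D a + ε D b := by
  unfold hammingNorm at hd
  obtain ⟨a, b, hab, hset⟩ := Finset.card_eq_two.mp hd
  refine ⟨a, b, a.isLt, b.isLt, fun h => hab (Fin.ext h), ?_⟩
  funext y
  have hmem : ∀ z : Fin D, d z ≠ 0 ↔ (z = a ∨ z = b) := by
    intro z
    constructor
    · intro h
      have : z ∈ Finset.univ.filter (fun i => d i ≠ 0) := by simp [h]
      rw [hset] at this
      simpa using this
    · intro h
      have : z ∈ ({a, b} : Finset (Fin D)) := by simpa using h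
      rw [← hset] at this
      simpa using this
  show d y = ε D a y + ε D b y
  by_cases hy : y = a ∨ y = b
  · have hdy : d y ≠ 0 := (hmem y).mpr hy
    have hd1 : d y = 1 := by rcases zmod2_cases (d y) with h | h; exact absurd h hdy; exact h
    have hba : (a : ℕ) ≠ (b : ℕ) := fun hh => hab (Fin.ext hh)
    rcases hy with h | h
    · rw [hd1, h]; simp [ε, hba]
    · rw [hd1, h]; simp [ε, Ne.symm hba]
  · push_neg at hy
    have hdy : d y = 0 := by
      by_contra h
      exact (hy.1 <| ((hmem y).mp h).resolve_right (fun hh => hy.2 hh))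
    have hy1 : (y : ℕ) ≠ a := fun hh => hy.1 (Fin.ext hh)
    have hy2 : (y : ℕ) ≠ b := fun hh => hy.2 (Fin.ext hh)
    simp [hdy, ε, hy1, hy2]

/-- fiber count for the 2-to-1 map. -/
lemma fiber_count (d : Vtx D) :
    #(((Finset.range D) ×ˢ (Finset.range D)).filter (fun p => ε D p.1 + ε D p.2 = d))
      = if d = 0 then D else if hammingNorm d = 2 then 2 else 0 := by
  by_cases h0 : d = 0
  · rw [if_pos h0]
    have : ((Finset.range D) ×ˢ (Finset.range D)).filter (fun p => ε D p.1 + ε D p.2 = d)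
        = (Finset.range D).image (fun x => (x, x)) := by
      ext p
      simp only [Finset.mem_filter, Finset.mem_product, Finset.mem_range, Finset.mem_image, h0]
      constructor
      · rintro ⟨⟨h1, h2⟩, heq⟩
        refine ⟨p.1, h1, ?_⟩
        have hpp : ε D p.1 = ε D p.2 := by
          have : ε D p.1 + ε D p.2 + ε D p.2 = ε D p.2 := by rw [heq]; simp
          rwa [add_assoc, eps_add_self, add_zero] at this
        have := eps_eq_of p.1 p.2 (by omega) hpp
        exact Prod.ext rfl this
      · rintro ⟨x, hx, rfl⟩
        exact ⟨⟨hx, hx⟩, eps_add_self x⟩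
    rw [this, Finset.card_image_of_injective _ (fun a b h => (Prod.mk.injEq _ _ _ _ ▸ h).1 ▸ rfl)]
    · exact Finset.card_range D
  · rw [if_neg h0]
    by_cases h2 : hammingNorm d = 2
    · rw [if_pos h2]
      obtain ⟨a, b, ha, hb, hab, rfl⟩ := eq_eps_pair_of_wt_two d h2
      have : ((Finset.range D) ×ˢ (Finset.range D)).filter
          (fun p => ε D p.1 + ε D p.2 = ε D a + ε D b) = {(a, b), (b, a)} := by
        ext p
        simp only [Finset.mem_filter, Finset.mem_product, Finset.mem_range, Finset.mem_insert,
          Finset.mem_singleton]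
        constructor
        · rintro ⟨⟨h1, h2'⟩, heq⟩
          have hne : p.1 ≠ p.2 := by
            intro hpp
            apply h0
            rw [← heq, hpp, eps_add_self]
          -- evaluate at coordinates
          have hval : ∀ y : ℕ, y < D →
              bit (ε D p.1 + ε D p.2) y = bit (ε D a + ε D b) y := by
            intro y hy; rw [heq]
          have key : ∀ y : ℕ, y < D → ((y = p.1 ∨ y = p.2) ↔ (y = a ∨ y = b)) := by
            intro y hy
            have := hval y hy
            rw [bit_add, bit_add, bit_eps, bit_eps, bit_eps, bit_eps] at this
            constructor
            · intro h
              by_contra hcon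
              push_neg at hcon
              rcases h with h | h <;> subst h <;>
                simp [hy, hcon.1, hcon.2, hne, Ne.symm hne] at this
            · intro h
              by_contra hcon
              push_neg at hcon
              rcases h with h | h <;> subst h <;>
                simp [hy, hcon.1, hcon.2, hab, Ne.symm hab] at this
          have hp1 : p.1 = a ∨ p.1 = b := (key p.1 h1).mp (Or.inl rfl)
          have hp2 : p.2 = a ∨ p.2 = b := (key p.2 h2').mp (Or.inr rfl)
          rcases hp1 with h | h <;> rcases hp2 with h' | h'
          · omega
          · left; rw [← h, ← h']
          · right; rw [← h, ← h']
          · omega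
        · rintro (h | h) <;> subst h
          · exact ⟨⟨Finset.mem_range.mp (by simpa using ha), hb⟩, rfl⟩
          · exact ⟨⟨hb, ha⟩, add_comm _ _⟩
      rw [this]
      rw [Finset.card_insert_of_notMem (by simp [hab, Ne.symm hab, Prod.ext_iff]), Finset.card_singleton]
    · rw [if_neg h2]
      rw [Finset.card_eq_zero, Finset.filter_eq_empty_iff]
      rintro ⟨x, x'⟩ hp
      rw [Finset.mem_product, Finset.mem_range, Finset.mem_range] at hp
      intro heq
      by_cases hxx : x = x'
      · subst hxx
        rw [eps_add_self] at heq
        exact h0 heq.symm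
      · apply h2
        rw [← heq]
        exact wt_eps_pair x x' hp.1 hp.2 hxx

lemma sum_pairs (f : Vtx D → ℂ) (c : Vtx D) :
    ∑ x ∈ Finset.range D, ∑ x' ∈ Finset.range D, f (c + ε D x + ε D x')
      = (D : ℂ) * f c + 2 * ∑ d : Vtx D, (if hammingNorm d = 2 then 1 else 0) * f (c + d) := by
  have hfib := Finset.sum_fiberwise_of_maps_to (s := (Finset.range D) ×ˢ (Finset.range D))
    (t := Finset.univ) (g := fun p => ε D p.1 + ε D p.2) (fun p _ => Finset.mem_univ _)
    (fun p => f (c + (ε D p.1 + ε D p.2)))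
  have hprod : ∑ x ∈ Finset.range D, ∑ x' ∈ Finset.range D, f (c + ε D x + ε D x')
      = ∑ p ∈ (Finset.range D) ×ˢ (Finset.range D), f (c + (ε D p.1 + ε D p.2)) := by
    rw [Finset.sum_product]
    congr 1; funext x; congr 1; funext x'
    rw [add_assoc]
  rw [hprod, ← hfib]
  have hterm : ∀ d : Vtx D,
      (∑ p ∈ ((Finset.range D) ×ˢ (Finset.range D)).filter
          (fun p => ε D p.1 + ε D p.2 = d), f (c + (ε D p.1 + ε D p.2)))
        = (if d = 0 then (D : ℂ) else if hammingNorm d = 2 then 2 else 0) * f (c + d) := by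
    intro d
    have : ∀ p ∈ ((Finset.range D) ×ˢ (Finset.range D)).filter
        (fun p => ε D p.1 + ε D p.2 = d), f (c + (ε D p.1 + ε D p.2)) = f (c + d) := by
      intro p hp
      rw [(Finset.mem_filter.mp hp).2]
    rw [Finset.sum_congr rfl this, Finset.sum_const, fiber_count, nsmul_eq_mul]
    split
    · rfl
    · split <;> norm_num
  rw [Finset.sum_congr rfl (fun d _ => hterm d)]
  have hsplit : ∀ d : Vtx D,
      (if d = 0 then (D : ℂ) else if hammingNorm d = 2 then 2 else 0) * f (c + d)
        = (if d = 0 then (D : ℂ) * f (c + d) else 0)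
          + 2 * ((if hammingNorm d = 2 then 1 else 0) * f (c + d)) := by
    intro d
    by_cases h0 : d = 0
    · subst h0
      simp [show hammingNorm (0 : Vtx D) = 0 by simp [hammingNorm]]
    · rw [if_neg h0, if_neg h0, zero_add]
      split <;> ring
  rw [Finset.sum_congr rfl (fun d _ => hsplit d), Finset.sum_add_distrib, ← Finset.mul_sum]
  congr 1
  rw [Finset.sum_ite_eq' Finset.univ (0 : Vtx D) (fun d => (D : ℂ) * f (c + d))]
  simp

lemma L2 (r : ℕ) (hrD : 2 * r ≤ D) (i : ℕ) (c : Vtx D) :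
    ∑ d : Vtx D, (if hammingNorm d = 2 then 1 else 0) * V D r (2 * i + 1) (c + d)
      = (((D : ℂ) - 2 * r - 2 * i) * ((D : ℂ) - 2 * r - 2 * i + 1) / 2) *
          (if i = 0 then 0 else V D r (2 * i - 1) c)
        + (((((D : ℂ) - 2 * r - 2 * i) * (2 * i + 1)
            + (2 * i + 2) * ((D : ℂ) - 2 * r - 2 * i - 1) - D) / 2)) * V D r (2 * i + 1) c
        + (((i : ℂ) + 1) * (2 * i + 3)) * V D r (2 * i + 3) c := by
  have hp := sum_pairs (V D r (2 * i + 1)) c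
  have inner : ∀ x : ℕ, ∑ x' ∈ Finset.range D, V D r (2 * i + 1) (c + ε D x + ε D x')
      = ((D : ℂ) - 2 * r - (2 * i + 1 : ℕ) + 1) * V D r (2 * i) (c + ε D x)
        + (((2 * i + 1 : ℕ) : ℂ) + 1) * V D r (2 * i + 2) (c + ε D x) := by
    intro x
    have h := L1 r hrD (2 * i + 1) (c + ε D x)
    rw [if_neg (by omega : ¬ (2 * i + 1 = 0))] at h
    exact h
  have hT : ∑ x ∈ Finset.range D, ∑ x' ∈ Finset.range D, V D r (2 * i + 1) (c + ε D x + ε D x')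
      = ((D : ℂ) - 2 * r - (2 * i + 1 : ℕ) + 1) *
          (∑ x ∈ Finset.range D, V D r (2 * i) (c + ε D x))
        + (((2 * i + 1 : ℕ) : ℂ) + 1) *
          (∑ x ∈ Finset.range D, V D r (2 * i + 2) (c + ε D x)) := by
    rw [Finset.sum_congr rfl (fun x _ => inner x), Finset.sum_add_distrib,
      ← Finset.mul_sum, ← Finset.mul_sum]
  rw [L1 r hrD (2 * i) c, L1 r hrD (2 * i + 2) c,
    if_neg (by omega : ¬ (2 * i + 2 = 0))] at hT
  have hite : (if 2 * i = 0 then (0 : ℂ) else V D r (2 * i - 1) c)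
      = (if i = 0 then (0 : ℂ) else V D r (2 * i - 1) c) := by
    by_cases h : i = 0 <;> simp [h]
  rw [hite] at hT
  have h221 : (2 * i + 2 - 1 : ℕ) = 2 * i + 1 := by omega
  rw [h221] at hT
  rw [hT] at hp
  have hgoal := hp
  push_cast at hgoal ⊢
  linear_combination (hgoal) / (-2)

lemma bit_coe (c : Vtx D) (j : Fin D) : bit c (j : ℕ) = c j := by
  unfold bit
  rw [dif_pos j.isLt]

lemma hammingNorm_eq_sum (c : Vtx D) :
    hammingNorm c = ∑ x ∈ Finset.range D, (if bit c x = 1 then 1 else 0) := by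
  unfold hammingNorm
  rw [Finset.card_filter]
  rw [← Fin.sum_univ_eq_sum_range (fun x => if bit c x = 1 then 1 else 0) D]
  apply Finset.sum_congr rfl
  intro j _
  rw [bit_coe]
  rcases zmod2_cases (c j) with h0 | h0 <;> rw [h0] <;> norm_num

lemma pv_ne_zero {a b : ZMod 2} (h : pv a b ≠ 0) :
    (a = 0 ∧ b = 1) ∨ (a = 1 ∧ b = 0) := by
  unfold pv at h
  split at h
  · left; assumption
  · split at h
    · right; assumption
    · exact absurd rfl h

lemma V_support (r m : ℕ) (hrD : 2 * r ≤ D) (c : Vtx D) (h : V D r m c ≠ 0) :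
    hammingNorm c = r + m := by
  unfold V at h
  have hP : P D r c ≠ 0 := fun h0 => h (by rw [h0, zero_mul])
  have htw : tw D r c = m := by
    by_contra h0
    rw [if_neg h0, mul_zero] at h
    exact h rfl
  rw [hammingNorm_eq_sum, Finset.range_eq_Ico,
    ← Finset.sum_Ico_consecutive _ (Nat.zero_le (2 * r)) hrD]
  have htail : ∑ x ∈ Finset.Ico (2 * r) D, (if bit c x = 1 then 1 else 0) = m := by
    rw [← Finset.card_filter]
    exact htw
  have hpair : ∑ x ∈ Finset.Ico 0 (2 * r), (if bit c x = 1 then 1 else 0) = r := by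
    rw [← Finset.range_eq_Ico, sum_range_two_mul]
    have hone : ∀ t ∈ Finset.range r,
        ((if bit c (2 * t) = 1 then 1 else 0) + if bit c (2 * t + 1) = 1 then 1 else 0) = 1 := by
      intro t ht
      have hpv : pv (bit c (2 * t)) (bit c (2 * t + 1)) ≠ 0 := by
        intro h0
        exact hP (Finset.prod_eq_zero ht h0)
      rcases pv_ne_zero hpv with ⟨h1, h2⟩ | ⟨h1, h2⟩ <;> rw [h1, h2] <;> decide
    rw [Finset.sum_congr rfl hone, Finset.sum_const, Finset.card_range, smul_eq_mul, mul_one]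
  rw [htail, hpair]

lemma V_tw {r m : ℕ} {c : Vtx D} (h : V D r m c ≠ 0) : tw D r c = m := by
  unfold V at h
  by_contra h0
  rw [if_neg h0, mul_zero] at h
  exact h rfl

lemma wt_add_parity (a b : Vtx D) :
    Even (hammingNorm (a + b) + (hammingNorm a + hammingNorm b)) := by
  rw [hammingNorm_eq_sum, hammingNorm_eq_sum, hammingNorm_eq_sum,
    ← Finset.sum_add_distrib, ← Finset.sum_add_distrib]
  apply Finset.even_sum
  intro x _
  rw [bit_add]
  rcases zmod2_cases (bit a x) with h1 | h1 <;> rcases zmod2_cases (bit b x) with h2 | h2 <;>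
    rw [h1, h2] <;> decide

lemma vsub_eq_add (a b : Vtx D) : a - b = a + b := by
  funext j
  show a j - b j = a j + b j
  rcases zmod2_cases (a j) with h1 | h1 <;> rcases zmod2_cases (b j) with h2 | h2 <;>
    rw [h1, h2] <;> decide

variable (D) in
/-- witness vertex pattern. -/
def wit (r m : ℕ) : Vtx D :=
  fun j => if ((j : ℕ) < 2 * r ∧ (j : ℕ) % 2 = 1) ∨ (2 * r ≤ (j : ℕ) ∧ (j : ℕ) < 2 * r + m)
    then 1 else 0

lemma bit_wit (r m x : ℕ) (hx : x < D) :
    bit (wit D r m) x = if (x < 2 * r ∧ x % 2 = 1) ∨ (2 * r ≤ x ∧ x < 2 * r + m) then 1 else 0 := by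
  unfold bit wit
  rw [dif_pos hx]

lemma P_wit (r m : ℕ) (hrD : 2 * r ≤ D) : P D r (wit D r m) = 1 := by
  unfold P
  apply Finset.prod_eq_one
  intro t ht
  rw [Finset.mem_range] at ht
  rw [bit_wit r m _ (by omega), bit_wit r m _ (by omega),
    if_neg (by omega), if_pos (by omega)]
  unfold pv
  norm_num

lemma tw_wit (r m : ℕ) (hm : 2 * r + m ≤ D) : tw D r (wit D r m) = m := by
  unfold tw
  have : (Finset.Ico (2 * r) D).filter (fun x => bit (wit D r m) x = 1)
      = Finset.Ico (2 * r) (2 * r + m) := by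
    ext y
    simp only [Finset.mem_filter, Finset.mem_Ico]
    constructor
    · rintro ⟨⟨hy1, hy2⟩, hb⟩
      rw [bit_wit r m _ hy2] at hb
      refine ⟨hy1, ?_⟩
      by_contra hcon
      rw [if_neg (by omega)] at hb
      exact absurd hb (by decide)
    · intro hy
      have hyD : y < D := by omega
      rw [bit_wit r m _ hyD, if_pos (by omega)]
      exact ⟨⟨by omega, hyD⟩, rfl⟩
  rw [this, Nat.card_Ico]
  omega

lemma V_wit (r m : ℕ) (hm : 2 * r + m ≤ D) : V D r m (wit D r m) = 1 := by
  unfold V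
  rw [P_wit r m (by omega), tw_wit r m hm, if_pos rfl, one_mul]

end HalvedAux

open HalvedAux in
theorem stmt1 (D : ℕ) (hD : 3 ≤ D) (x₀ : HVtx D) (k : ℕ) (hk : Even k)
    (hk2 : 2 ≤ k) (hkD : k ≤ (D + 1) / 2) :
    ∃ W : Submodule ℂ (HVtx D → ℂ),
      Module.finrank ℂ W = (D + 1) / 2 - k + 1 ∧
      MatInvariant (adjHalf D) W ∧
      MatInvariant (dualHalf D x₀) W ∧
      (∀ U : Submodule ℂ (HVtx D → ℂ), U ≤ W →
        MatInvariant (adjHalf D) U → MatInvariant (dualHalf D x₀) U → U = ⊥ ∨ U = W) ∧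
      ∃ w : ℕ → (HVtx D → ℂ),
        (∀ i ≤ (D + 1) / 2 - k, w i ∈ W) ∧
        LinearIndependent ℂ (fun i : Fin ((D + 1) / 2 - k + 1) => w i) ∧
        Submodule.span ℂ (w '' Set.Iic ((D + 1) / 2 - k)) = W ∧
        w ((D + 1) / 2 - k + 1) = 0 ∧
        (∀ i ≤ (D + 1) / 2 - k,
          (adjHalf D).mulVec (w i) =
            ((((D : ℂ) - 2 * i - 2 * k + 2) * ((D : ℂ) - 2 * i - 2 * k + 3)) / 2) •
              (if i = 0 then 0 else w (i - 1)) +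
            ((2 * (i : ℂ) + 1) * ((D : ℂ) - 2 * i - 2 * k + 1) - k + 1) • w i +
            (((i : ℂ) + 1) * (2 * i + 3)) • w (i + 1)) ∧
        (∀ i ≤ (D + 1) / 2 - k,
          (dualHalf D x₀).mulVec (w i) = ((D : ℂ) - 2 * (2 * i + k)) • w i) := by
  classical
  have hkev : k % 2 = 0 := Nat.even_iff.mp hk
  set r : ℕ := k - 1 with hr
  have hrD : 2 * r ≤ D := by omega
  set N : ℕ := (D + 1) / 2 - k with hN
  have hNle : 2 * N + 2 * k ≤ D + 1 := by omega
  set w : ℕ → (HVtx D → ℂ) := fun i y => V D r (2 * i + 1) (x₀.val - y.val) with hw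
  set W : Submodule ℂ (HVtx D → ℂ) := Submodule.span ℂ (w '' Set.Iic N) with hW
  have hx₀ : Even (hammingNorm x₀.val) := x₀.property
  -- evenness of any vertex on which some `w i` is nonzero
  have hVeven : ∀ (i : ℕ) (z : Vtx D), V D r (2 * i + 1) (x₀.val - z) ≠ 0 →
      Even (hammingNorm z) := by
    intro i z hz
    have hwt : hammingNorm (x₀.val - z) = r + (2 * i + 1) := V_support r _ hrD _ hz
    rw [vsub_eq_add] at hwt
    have hpar := wt_add_parity x₀.val z
    rw [hwt] at hpar
    rw [Nat.even_iff] at hpar hx₀ ⊢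
    omega
  -- the adjacency relation, for every i
  have hA : ∀ i : ℕ, (adjHalf D).mulVec (w i) =
      ((((D : ℂ) - 2 * i - 2 * k + 2) * ((D : ℂ) - 2 * i - 2 * k + 3)) / 2) •
        (if i = 0 then 0 else w (i - 1)) +
      ((2 * (i : ℂ) + 1) * ((D : ℂ) - 2 * i - 2 * k + 1) - k + 1) • w i +
      (((i : ℂ) + 1) * (2 * i + 3)) • w (i + 1) := by
    intro i
    funext y
    set c : Vtx D := x₀.val - y.val with hc
    have hLHS : (adjHalf D).mulVec (w i) y
        = ∑ d : Vtx D, (if hammingNorm d = 2 then 1 else 0) * V D r (2 * i + 1) (c + d) := by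
      calc (adjHalf D).mulVec (w i) y
          = ∑ z : HVtx D, (if hammingNorm (y.val - z.val) = 2 then 1 else 0)
              * V D r (2 * i + 1) (x₀.val - z.val) := rfl
        _ = ∑ z : Vtx D, (if hammingNorm (y.val - z) = 2 then 1 else 0)
              * V D r (2 * i + 1) (x₀.val - z) := by
            rw [← Fintype.sum_subtype_add_sum_subtype (fun z : Vtx D => Even (hammingNorm z))
              (fun z => (if hammingNorm (y.val - z) = 2 then 1 else 0)
                * V D r (2 * i + 1) (x₀.val - z))]
            have hodd : ∑ z : {x : Vtx D // ¬ Even (hammingNorm x)},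
                (if hammingNorm (y.val - z.val) = 2 then 1 else 0)
                  * V D r (2 * i + 1) (x₀.val - z.val) = 0 := by
              apply Finset.sum_eq_zero
              intro z _
              have hV0 : V D r (2 * i + 1) (x₀.val - z.val) = 0 := by
                by_contra h
                exact z.property (hVeven i z.val h)
              rw [hV0, mul_zero]
            rw [hodd, add_zero]
        _ = ∑ u : Vtx D, (if hammingNorm (y.val - (x₀.val - u)) = 2 then 1 else 0)
              * V D r (2 * i + 1) (x₀.val - (x₀.val - u)) := by
            refine (Fintype.sum_equiv (Equiv.subLeft x₀.val) _ _ (fun u => ?_)).symm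
            rw [Equiv.subLeft_apply]
        _ = ∑ d : Vtx D, (if hammingNorm (y.val - (x₀.val - (c + d))) = 2 then 1 else 0)
              * V D r (2 * i + 1) (x₀.val - (x₀.val - (c + d))) := by
            refine (Fintype.sum_equiv (Equiv.addLeft c) _ _ (fun d => ?_)).symm
            have : (Equiv.addLeft c) d = c + d := rfl
            rw [this]
        _ = ∑ d : Vtx D, (if hammingNorm d = 2 then 1 else 0)
              * V D r (2 * i + 1) (c + d) := by
            apply Finset.sum_congr rfl
            intro d _
            have h1 : y.val - (x₀.val - (c + d)) = d := by rw [hc]; ring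
            have h2 : x₀.val - (x₀.val - (c + d)) = c + d := by ring
            rw [h1, h2]
    rw [hLHS, L2 r hrD i c]
    have hrc : (r : ℂ) = (k : ℂ) - 1 := by
      have h1 : (r : ℕ) + 1 = k := by omega
      have h2 : ((r : ℕ) : ℂ) + 1 = (k : ℂ) := by exact_mod_cast congrArg (fun n : ℕ => (n : ℂ)) h1
      linear_combination h2
    show _ = (((((D : ℂ) - 2 * i - 2 * k + 2) * ((D : ℂ) - 2 * i - 2 * k + 3)) / 2) •
        (if i = 0 then 0 else w (i - 1)) +
      ((2 * (i : ℂ) + 1) * ((D : ℂ) - 2 * i - 2 * k + 1) - k + 1) • w i +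
      (((i : ℂ) + 1) * (2 * i + 3)) • w (i + 1)) y
    simp only [Pi.add_apply, Pi.smul_apply, smul_eq_mul]
    have hitey : ((if i = 0 then (0 : HVtx D → ℂ) else w (i - 1)) y)
        = (if i = 0 then (0 : ℂ) else w (i - 1) y) := by
      by_cases h : i = 0 <;> simp [h]
    rw [hitey]
    show _ * (if i = 0 then (0:ℂ) else V D r (2 * i - 1) c) + _ * V D r (2*i+1) c
          + _ * V D r (2*i+3) c
        = _ * (if i = 0 then (0:ℂ) else V D r (2 * (i-1) + 1) c) + _ * V D r (2*i+1) c
          + _ * V D r (2*(i+1)+1) c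
    by_cases h : i = 0
    · subst h
      rw [if_pos rfl, if_pos rfl]
      rw [hrc]
      push_cast
      ring_nf
    · rw [if_neg h, if_neg h, (show 2 * (i - 1) + 1 = 2 * i - 1 by omega),
        (show 2 * (i + 1) + 1 = 2 * i + 3 by ring)]
      rw [hrc]
      push_cast
      ring_nf
  -- dual relation
  have hDrel : ∀ i : ℕ, (dualHalf D x₀).mulVec (w i) = ((D : ℂ) - 2 * (2 * i + k)) • w i := by
    intro i
    funext y
    have hdiag : (dualHalf D x₀).mulVec (w i) y
        = ((D : ℂ) - 2 * hammingNorm (x₀.val - y.val)) * w i y :=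
      Matrix.mulVec_diagonal _ _ _
    rw [hdiag]
    show _ = ((D : ℂ) - 2 * (2 * (i:ℂ) + (k:ℂ))) * w i y
    by_cases h : w i y = 0
    · rw [h, mul_zero, mul_zero]
    · have hwt : hammingNorm (x₀.val - y.val) = r + (2 * i + 1) := V_support r _ hrD _ h
      rw [hwt]
      have : ((r + (2 * i + 1) : ℕ) : ℂ) = 2 * (i:ℂ) + (k:ℂ) := by
        have h1 : (r + (2 * i + 1) : ℕ) = 2 * i + k := by omega
        rw [h1]
        push_cast
        ring
      rw [this]
  -- w (N+1) = 0
  have hwN1 : w (N + 1) = 0 := by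
    funext y
    show V D r (2 * (N + 1) + 1) (x₀.val - y.val) = 0
    unfold HalvedAux.V
    rw [if_neg, mul_zero]
    have := tw_le (D := D) r (x₀.val - y.val)
    omega
  -- membership of generators
  have hmemW : ∀ j : ℕ, j ≤ N + 1 → w j ∈ W := by
    intro j hj
    by_cases h : j ≤ N
    · exact Submodule.subset_span ⟨j, h, rfl⟩
    · have : j = N + 1 := by omega
      rw [this, hwN1]
      exact W.zero_mem
  -- witness vertices
  have hwitv : ∀ i : ℕ, i ≤ N → ∃ y : HVtx D, ∀ j : ℕ, w j y = if j = i then 1 else 0 := by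
    intro i hi
    have hmD : 2 * r + (2 * i + 1) ≤ D := by omega
    set c₀ : Vtx D := wit D r (2 * i + 1) with hc₀
    have hV1 : V D r (2 * i + 1) c₀ = 1 := V_wit r (2 * i + 1) hmD
    have htwc : tw D r c₀ = 2 * i + 1 := tw_wit r (2 * i + 1) hmD
    have hwtc : hammingNorm c₀ = r + (2 * i + 1) :=
      V_support r _ hrD _ (by rw [hV1]; exact one_ne_zero)
    have hy : Even (hammingNorm (x₀.val - c₀)) := by
      rw [vsub_eq_add]
      have hpar := wt_add_parity x₀.val c₀
      rw [Nat.even_iff] at hpar hx₀ ⊢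
      rw [hwtc] at hpar
      omega
    refine ⟨⟨x₀.val - c₀, hy⟩, fun j => ?_⟩
    have hcc : x₀.val - (x₀.val - c₀) = c₀ := sub_sub_cancel _ _
    show V D r (2 * j + 1) (x₀.val - (x₀.val - c₀)) = _
    rw [hcc]
    by_cases h : j = i
    · rw [if_pos h, h, hV1]
    · rw [if_neg h]
      unfold HalvedAux.V
      rw [if_neg (by omega), mul_zero]
  -- linear independence
  have hLI : LinearIndependent ℂ (fun i : Fin (N + 1) => w i) := by
    rw [Fintype.linearIndependent_iff]
    intro g hg i
    obtain ⟨y, hy⟩ := hwitv i.val (by omega)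
    have := congrFun hg y
    rw [Finset.sum_apply] at this
    have hterm : ∀ j : Fin (N + 1), (g j • w ↑j) y = if j = i then g j else 0 := by
      intro j
      rw [Pi.smul_apply, smul_eq_mul, hy j.val]
      by_cases h : j = i
      · rw [if_pos h, if_pos (by rw [h]), mul_one]
      · rw [if_neg h, if_neg (fun hv => h (Fin.val_injective hv)), mul_zero]
    rw [Finset.sum_congr rfl (fun j _ => hterm j), Finset.sum_ite_eq' Finset.univ i g,
      if_pos (Finset.mem_univ i)] at this
    rw [this]
    rfl
  -- image = range
  have himg : w '' Set.Iic N = Set.range (fun i : Fin (N + 1) => w i) := by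
    ext v
    constructor
    · rintro ⟨j, hj, rfl⟩
      have hj' : j ≤ N := hj
      exact ⟨⟨j, by omega⟩, rfl⟩
    · rintro ⟨j, rfl⟩
      have hj' : j.val ≤ N := Nat.lt_succ_iff.mp j.isLt
      exact ⟨j.val, hj', rfl⟩
  -- invariance of W under adjHalf
  have hInvA : MatInvariant (adjHalf D) W := by
    intro v hv
    induction hv using Submodule.span_induction with
    | mem x hx =>
      obtain ⟨j, hj, rfl⟩ := hx
      have hj' : j ≤ N := hj
      rw [hA j]
      refine W.add_mem (W.add_mem (W.smul_mem _ ?_) (W.smul_mem _ (hmemW j (by omega))))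
        (W.smul_mem _ (hmemW (j + 1) (by omega)))
      by_cases h : j = 0
      · rw [if_pos h]; exact W.zero_mem
      · rw [if_neg h]; exact hmemW (j - 1) (by omega)
    | zero => rw [Matrix.mulVec_zero]; exact W.zero_mem
    | add x y hx hy ihx ihy => rw [Matrix.mulVec_add]; exact W.add_mem ihx ihy
    | smul a x hx ih => rw [Matrix.mulVec_smul]; exact W.smul_mem a ih
  -- invariance of W under dualHalf
  have hInvD : MatInvariant (dualHalf D x₀) W := by
    intro v hv
    induction hv using Submodule.span_induction with
    | mem x hx =>
      obtain ⟨j, hj, rfl⟩ := hx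
      have hj' : j ≤ N := hj
      rw [hDrel j]
      exact W.smul_mem _ (hmemW j (by omega))
    | zero => rw [Matrix.mulVec_zero]; exact W.zero_mem
    | add x y hx hy ihx ihy => rw [Matrix.mulVec_add]; exact W.add_mem ihx ihy
    | smul a x hx ih => rw [Matrix.mulVec_smul]; exact W.smul_mem a ih
  -- nonzero coefficients
  have hγ : ∀ i : ℕ, i ≤ N →
      (((D : ℂ) - 2 * i - 2 * k + 2) * ((D : ℂ) - 2 * i - 2 * k + 3)) / 2 ≠ 0 := by
    intro i hi
    have h2 : ((D : ℂ) - 2 * i - 2 * k + 2) = ((D + 2 - (2 * i + 2 * k) : ℕ) : ℂ) := by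
      rw [Nat.cast_sub (by omega)]
      push_cast; ring
    have h3 : ((D : ℂ) - 2 * i - 2 * k + 3) = ((D + 3 - (2 * i + 2 * k) : ℕ) : ℂ) := by
      rw [Nat.cast_sub (by omega)]
      push_cast; ring
    rw [h2, h3]
    apply div_ne_zero _ two_ne_zero
    exact mul_ne_zero (Nat.cast_ne_zero.mpr (by omega)) (Nat.cast_ne_zero.mpr (by omega))
  have hβ : ∀ i : ℕ, ((i : ℂ) + 1) * (2 * (i : ℂ) + 3) ≠ 0 := by
    intro i
    have h1 : ((i : ℂ) + 1) * (2 * (i : ℂ) + 3) = (((i + 1) * (2 * i + 3) : ℕ) : ℂ) := by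
      push_cast; ring
    rw [h1]
    exact Nat.cast_ne_zero.mpr (by positivity)
  refine ⟨W, ?_, hInvA, hInvD, ?_, w, fun i hi => hmemW i (by omega), hLI, rfl, hwN1,
    fun i _ => hA i, fun i _ => hDrel i⟩
  · rw [hW, himg, finrank_span_eq_card hLI, Fintype.card_fin]
  · -- minimality
    intro U hUW hUA hUD
    by_cases hU0 : U = ⊥
    · exact Or.inl hU0
    right
    have hscale : ∀ (t : ℂ) (v : HVtx D → ℂ), t ≠ 0 → t • v ∈ U → v ∈ U := by
      intro t v ht h
      have := U.smul_mem t⁻¹ h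
      rwa [smul_smul, inv_mul_cancel₀ ht, one_smul] at this
    have hθinj : ∀ p q : Fin (N + 1), p ≠ q →
        ((D : ℂ) - 2 * (2 * ((p : ℕ) : ℂ) + k)) ≠ ((D : ℂ) - 2 * (2 * ((q : ℕ) : ℂ) + k)) := by
      intro p q hpq heq
      have : (((p : ℕ) : ℂ)) = ((q : ℕ) : ℂ) := by linear_combination heq / (-4)
      exact hpq (Fin.val_injective (Nat.cast_injective this))
    have hclaim : ∀ s : Finset (Fin (N + 1)), ∀ a : Fin (N + 1) → ℂ,
        (∑ j ∈ s, a j • w ↑j) ∈ U → ∀ j ∈ s, a j • w ↑j ∈ U := by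
      intro s
      induction s using Finset.cons_induction with
      | empty => intro a _ j hj; exact absurd hj (Finset.notMem_empty j)
      | cons j₀ s hj₀ ih =>
        intro a hsum j hj
        have hveq : (dualHalf D x₀).mulVec (∑ p ∈ Finset.cons j₀ s hj₀, a p • w ↑p)
            - ((D : ℂ) - 2 * (2 * ((j₀ : ℕ) : ℂ) + k)) • (∑ p ∈ Finset.cons j₀ s hj₀, a p • w ↑p)
            = ∑ p ∈ s, ((((D : ℂ) - 2 * (2 * ((p : ℕ) : ℂ) + k))
                - ((D : ℂ) - 2 * (2 * ((j₀ : ℕ) : ℂ) + k))) * a p) • w ↑p := by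
          have hmv : (dualHalf D x₀).mulVec (∑ p ∈ Finset.cons j₀ s hj₀, a p • w ↑p)
              = ∑ p ∈ Finset.cons j₀ s hj₀,
                  (a p * ((D : ℂ) - 2 * (2 * ((p : ℕ) : ℂ) + k))) • w ↑p := by
            rw [← Matrix.mulVecLin_apply, map_sum]
            apply Finset.sum_congr rfl
            intro p _
            rw [LinearMap.map_smul, Matrix.mulVecLin_apply, hDrel (↑p : ℕ), smul_smul]
          rw [hmv, Finset.smul_sum]
          rw [← Finset.sum_sub_distrib]
          have hterm : ∀ p : Fin (N + 1),
              (a p * ((D : ℂ) - 2 * (2 * ((p : ℕ) : ℂ) + k))) • w ↑p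
                - ((D : ℂ) - 2 * (2 * ((j₀ : ℕ) : ℂ) + k)) • (a p • w ↑p)
              = ((((D : ℂ) - 2 * (2 * ((p : ℕ) : ℂ) + k))
                  - ((D : ℂ) - 2 * (2 * ((j₀ : ℕ) : ℂ) + k))) * a p) • w ↑p := by
            intro p
            rw [smul_smul, ← sub_smul]
            congr 1
            ring
          rw [Finset.sum_congr rfl (fun p _ => hterm p), Finset.sum_cons]
          rw [show (((D : ℂ) - 2 * (2 * ((j₀ : ℕ) : ℂ) + k))
              - ((D : ℂ) - 2 * (2 * ((j₀ : ℕ) : ℂ) + k))) * a j₀ = 0 by ring, zero_smul, zero_add]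
        have hvU : (∑ p ∈ s, ((((D : ℂ) - 2 * (2 * ((p : ℕ) : ℂ) + k))
            - ((D : ℂ) - 2 * (2 * ((j₀ : ℕ) : ℂ) + k))) * a p) • w ↑p) ∈ U := by
          rw [← hveq]
          exact U.sub_mem (hUD _ hsum) (U.smul_mem _ hsum)
        have hall : ∀ p ∈ s, a p • w ↑p ∈ U := by
          intro p hps
          have h1 := ih (fun q => ((((D : ℂ) - 2 * (2 * ((q : ℕ) : ℂ) + k))
            - ((D : ℂ) - 2 * (2 * ((j₀ : ℕ) : ℂ) + k))) * a q)) hvU p hps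
          have hne : (((D : ℂ) - 2 * (2 * ((p : ℕ) : ℂ) + k))
              - ((D : ℂ) - 2 * (2 * ((j₀ : ℕ) : ℂ) + k))) ≠ 0 :=
            sub_ne_zero.mpr (hθinj p j₀ (by rintro rfl; exact hj₀ hps))
          rw [← smul_smul] at h1
          exact hscale _ _ hne h1
        rcases Finset.mem_cons.mp hj with heq | hjs
        · subst heq
          have hrest : (∑ p ∈ s, a p • w ↑p) ∈ U :=
            Submodule.sum_mem U (fun p hp => hall p hp)
          have : a j • w ↑j = (∑ p ∈ Finset.cons j s hj₀, a p • w ↑p) - ∑ p ∈ s, a p • w ↑p := by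
            rw [Finset.sum_cons]
            abel
          rw [this]
          exact U.sub_mem hsum hrest
        · exact hall j hjs
    -- a nonzero element gives some w i₀ ∈ U
    obtain ⟨u, hu, hune⟩ := Submodule.ne_bot_iff U |>.mp hU0
    have huW : u ∈ Submodule.span ℂ (Set.range fun i : Fin (N + 1) => w ↑i) := by
      rw [← himg]
      exact hUW hu
    obtain ⟨a, ha⟩ := (Submodule.mem_span_range_iff_exists_fun ℂ).mp huW
    have ha' : ∑ j : Fin (N + 1), a j • w ↑j = u := ha
    have hex : ∃ i : Fin (N + 1), a i ≠ 0 := by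
      by_contra hno
      push_neg at hno
      apply hune
      rw [← ha']
      exact Finset.sum_eq_zero (fun i _ => by rw [hno i, zero_smul])
    obtain ⟨i₀, hi₀⟩ := hex
    have hw0U : w ↑i₀ ∈ U :=
      hscale _ _ hi₀ (hclaim Finset.univ a (by rw [ha']; exact hu) i₀ (Finset.mem_univ _))
    -- step lemma
    have hstep : ∀ i : ℕ, i ≤ N → w i ∈ U → (w (i + 1) ∈ U ∧ (1 ≤ i → w (i - 1) ∈ U)) := by
      intro i hi hwi
      have h1 : ((((D : ℂ) - 2 * i - 2 * k + 2) * ((D : ℂ) - 2 * i - 2 * k + 3)) / 2) •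
          (if i = 0 then 0 else w (i - 1)) + (((i : ℂ) + 1) * (2 * (i : ℂ) + 3)) • w (i + 1) ∈ U := by
        have hAU := hUA _ hwi
        rw [hA i] at hAU
        have h2 := U.sub_mem hAU
          (U.smul_mem ((2 * (i : ℂ) + 1) * ((D : ℂ) - 2 * i - 2 * k + 1) - (k : ℂ) + 1) hwi)
        have h3 : ((((D : ℂ) - 2 * i - 2 * k + 2) * ((D : ℂ) - 2 * i - 2 * k + 3)) / 2) •
              (if i = 0 then 0 else w (i - 1)) +
            ((2 * (i : ℂ) + 1) * ((D : ℂ) - 2 * i - 2 * k + 1) - (k : ℂ) + 1) • w i +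
            (((i : ℂ) + 1) * (2 * (i : ℂ) + 3)) • w (i + 1) -
            ((2 * (i : ℂ) + 1) * ((D : ℂ) - 2 * i - 2 * k + 1) - (k : ℂ) + 1) • w i
          = ((((D : ℂ) - 2 * i - 2 * k + 2) * ((D : ℂ) - 2 * i - 2 * k + 3)) / 2) •
              (if i = 0 then 0 else w (i - 1)) +
            (((i : ℂ) + 1) * (2 * (i : ℂ) + 3)) • w (i + 1) := by
          abel
        rwa [h3] at h2
      by_cases hiN : i = N
      · constructor
        · rw [show i + 1 = N + 1 by omega, hwN1]
          exact U.zero_mem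
        · intro h1i
          rw [show i + 1 = N + 1 by omega, hwN1, smul_zero, add_zero,
            if_neg (by omega : ¬ i = 0)] at h1
          exact hscale _ _ (hγ i hi) h1
      · have hi1N : i + 1 ≤ N := by omega
        by_cases hi0 : i = 0
        · constructor
          · rw [if_pos hi0, smul_zero, zero_add] at h1
            exact hscale _ _ (hβ i) h1
          · intro h1i
            omega
        · rw [if_neg hi0] at h1
          have hp : i - 1 < N + 1 := by omega
          have hq : i + 1 < N + 1 := by omega
          have hpq : (⟨i - 1, hp⟩ : Fin (N + 1)) ≠ ⟨i + 1, hq⟩ := by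
            intro h
            have h' : i - 1 = i + 1 := congrArg Fin.val h
            omega
          have hsum2 : ∑ j ∈ ({⟨i - 1, hp⟩, ⟨i + 1, hq⟩} : Finset (Fin (N + 1))),
              (fun j : Fin (N + 1) => if j = (⟨i - 1, hp⟩ : Fin (N + 1))
                then (((D : ℂ) - 2 * i - 2 * k + 2) * ((D : ℂ) - 2 * i - 2 * k + 3)) / 2
                else ((i : ℂ) + 1) * (2 * (i : ℂ) + 3)) j • w ↑j
              = ((((D : ℂ) - 2 * i - 2 * k + 2) * ((D : ℂ) - 2 * i - 2 * k + 3)) / 2) • w (i - 1)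
                + (((i : ℂ) + 1) * (2 * (i : ℂ) + 3)) • w (i + 1) := by
            rw [Finset.sum_pair hpq]
            have hne2 : (⟨i + 1, hq⟩ : Fin (N + 1)) ≠ ⟨i - 1, hp⟩ := Ne.symm hpq
            simp [hne2]
          have hboth := hclaim {⟨i - 1, hp⟩, ⟨i + 1, hq⟩} _ (by rw [hsum2]; exact h1)
          constructor
          · have h2 := hboth ⟨i + 1, hq⟩ (by simp)
            beta_reduce at h2
            rw [if_neg (Ne.symm hpq)] at h2
            exact hscale _ _ (hβ i) h2
          · intro h1i
            have h2 := hboth ⟨i - 1, hp⟩ (by simp)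
            beta_reduce at h2
            rw [if_pos rfl] at h2
            exact hscale _ _ (hγ i hi) h2
    have hi₀N : i₀.val ≤ N := Nat.lt_succ_iff.mp i₀.isLt
    have hup : ∀ t : ℕ, i₀.val + t ≤ N → w (i₀.val + t) ∈ U := by
      intro t
      induction t with
      | zero => intro _; exact hw0U
      | succ t ih =>
        intro h
        exact (hstep (i₀.val + t) (by omega) (ih (by omega))).1
    have hdown : ∀ t : ℕ, t ≤ i₀.val → w (i₀.val - t) ∈ U := by
      intro t
      induction t with
      | zero => intro _; exact hw0U
      | succ t ih =>
        intro h
        have h2 := (hstep (i₀.val - t) (by omega) (ih (by omega))).2 (by omega)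
        rwa [show i₀.val - t - 1 = i₀.val - (t + 1) by omega] at h2
    have hallw : ∀ j : ℕ, j ≤ N → w j ∈ U := by
      intro j hj
      rcases le_or_gt i₀.val j with h | h
      · have := hup (j - i₀.val) (by omega)
        rwa [show i₀.val + (j - i₀.val) = j by omega] at this
      · have := hdown (i₀.val - j) (by omega)
        rwa [show i₀.val - (i₀.val - j) = j by omega] at this
    refine le_antisymm hUW ?_
    rw [hW]
    rw [Submodule.span_le]
    rintro _ ⟨j, hj, rfl⟩
    exact hallw j hj
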